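/- Let S be a monoid and let r be a Kurosh-Amitsur radical of S-acts. Then the pair (R_r, S_r) satisfies conditions (1)–(4): (1) R_r ∩ S_r consists of trivial S-acts; (2) R_r is homomorphically closed; (3) S_r is closed under subacts; (4) every S-act A admits a system Σ of pairwise disjoint non-trivial subacts all belonging to R_r such that the Rees factor A/ρ_Σ belongs to S_r. -/

import Mathlib

universe u

/-- A (left) `S`-act: a type equipped with a monoid action of `S`. -/
structure SAct (S : Type u) [Monoid S] where
  carrier : Type u
  [mulAction : MulAction S carrier]

attribute [instance] SAct.mulAction

namespace SAct

variable {S : Type u} [Monoid S]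

/-- A homomorphism of `S`-acts. -/
def IsHom (A B : SAct S) (f : A.carrier → B.carrier) : Prop :=
  ∀ (s : S) (a : A.carrier), f (s • a) = s • f a

/-- A homomorphism is trivial if its image has at most one element. -/
def IsTrivialHom {A B : SAct S} (f : A.carrier → B.carrier) : Prop :=
  (Set.range f).Subsingleton

/-- Two `S`-acts are isomorphic if there is a bijective homomorphism between them. -/
def AreIso (A B : SAct S) : Prop :=
  ∃ f : A.carrier → B.carrier, IsHom A B f ∧ Function.Bijective f

/-- A subset of an `S`-act is a subact if it is closed under the action. -/
def IsSubact (A : SAct S) (B : Set A.carrier) : Prop :=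
  ∀ (s : S), ∀ a ∈ B, s • a ∈ B

/-- The `S`-act induced on a subact. -/
def sub (A : SAct S) (B : Set A.carrier) (h : IsSubact A B) : SAct S where
  carrier := ↥B
  mulAction :=
    { smul := fun s b => ⟨s • (b : A.carrier), h s b b.2⟩
      one_smul := fun b => Subtype.ext (one_smul S (b : A.carrier))
      mul_smul := fun s t b => Subtype.ext (mul_smul s t (b : A.carrier)) }

/-- A congruence on an `S`-act: an equivalence relation compatible with the action. -/
def IsActCon (A : SAct S) (ρ : Setoid A.carrier) : Prop :=
  ∀ (s : S) (a a' : A.carrier), ρ a a' → ρ (s • a) (s • a')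

/-- The quotient `S`-act of an `S`-act by a congruence. -/
def quot (A : SAct S) (ρ : Setoid A.carrier) (h : IsActCon A ρ) : SAct S where
  carrier := Quotient ρ
  mulAction :=
    { smul := fun s => Quotient.map (fun a => s • a) (fun a b hab => h s a b hab)
      one_smul := fun q => Quotient.inductionOn q (fun a => by
        show Quotient.map (fun a => (1 : S) • a) _ (Quotient.mk ρ a) = Quotient.mk ρ a
        rw [Quotient.map_mk, one_smul])
      mul_smul := fun s t q => Quotient.inductionOn q (fun a => by
        show Quotient.map (fun a => (s * t) • a) _ (Quotient.mk ρ a)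
            = Quotient.map (fun a => s • a) _ (Quotient.map (fun a => t • a) _ (Quotient.mk ρ a))
        rw [Quotient.map_mk, Quotient.map_mk, Quotient.map_mk, mul_smul]) }

/-- A system of pairwise disjoint non-trivial subacts of an `S`-act. -/
def IsSystem (A : SAct S) (Sys : Set (Set A.carrier)) : Prop :=
  (∀ B ∈ Sys, IsSubact A B ∧ ¬ B.Subsingleton) ∧
    (∀ B ∈ Sys, ∀ C ∈ Sys, B ≠ C → ∀ a ∈ B, a ∉ C)

/-- The Rees congruence determined by a system of pairwise disjoint
non-trivial subacts: `a` and `b` are related iff `a = b` or `a` and `b`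
lie in a common member of the system. -/
def reesSetoid (A : SAct S) (Sys : Set (Set A.carrier)) (hSys : IsSystem A Sys) :
    Setoid A.carrier where
  r a b := a = b ∨ ∃ B ∈ Sys, a ∈ B ∧ b ∈ B
  iseqv :=
    { refl := fun _ => Or.inl rfl
      symm := by
        rintro a b (rfl | ⟨B, hB, ha, hb⟩)
        · exact Or.inl rfl
        · exact Or.inr ⟨B, hB, hb, ha⟩
      trans := by
        rintro a b c (rfl | ⟨B, hB, ha, hb⟩) h2
        · exact h2
        · rcases h2 with rfl | ⟨C, hC, hb', hc⟩
          · exact Or.inr ⟨B, hB, ha, hb⟩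
          · by_cases hBC : B = C
            · exact Or.inr ⟨B, hB, ha, hBC ▸ hc⟩
            · exact absurd hb' (hSys.2 B hB C hC hBC b hb) }

/-- A Rees congruence is a congruence. -/
theorem reesSetoid_isActCon (A : SAct S) (Sys : Set (Set A.carrier)) (hSys : IsSystem A Sys) :
    IsActCon A (reesSetoid A Sys hSys) := by
  rintro s a a' (rfl | ⟨B, hB, ha, ha'⟩)
  · exact Or.inl rfl
  · exact Or.inr ⟨B, hB, (hSys.1 B hB).1 s a ha, (hSys.1 B hB).1 s a' ha'⟩

/-- The system of non-singleton classes of a congruence (for a Rees congruence,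
this is its system `Σ_ρ` of non-trivial subacts). -/
def nsClasses (A : SAct S) (ρ : Setoid A.carrier) : Set (Set A.carrier) :=
  {C | (∃ a, C = {x | ρ x a}) ∧ ¬ C.Subsingleton}

/-- A congruence is a Rees congruence if it arises from a system of pairwise
disjoint non-trivial subacts. -/
def IsRees (A : SAct S) (ρ : Setoid A.carrier) : Prop :=
  ∃ (Sys : Set (Set A.carrier)) (hSys : IsSystem A Sys), ρ = reesSetoid A Sys hSys

end SAct

open SAct

/-- A (normal) Hoehnke radical: an assignment of a congruence `rad A` to every
`S`-act `A`, functorial with respect to homomorphisms, and with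
`rad (A / rad A) = Δ`. -/
structure HoehnkeRadical (S : Type u) [Monoid S] where
  rad : (A : SAct S) → Setoid A.carrier
  isCon : ∀ A : SAct S, IsActCon A (rad A)
  functorial : ∀ {A B : SAct S} (f : A.carrier → B.carrier), IsHom A B f →
    ∀ a a' : A.carrier, rad A a a' → rad B (f a) (f a')
  rad_quot : ∀ A : SAct S, rad (A.quot (rad A) (isCon A)) = ⊥

namespace HoehnkeRadical

variable {S : Type u} [Monoid S]

/-- The radical class `R_r = {A : r(A) = ∇_A}` of a Hoehnke radical. -/
def radClass (r : HoehnkeRadical S) : Set (SAct S) := {A | r.rad A = ⊤}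

/-- The semisimple class `S_r = {A : r(A) = Δ_A}` of a Hoehnke radical. -/
def ssClass (r : HoehnkeRadical S) : Set (SAct S) := {A | r.rad A = ⊥}

/-- The pointwise order on Hoehnke radicals. -/
def le (r r' : HoehnkeRadical S) : Prop := ∀ A : SAct S, r.rad A ≤ r'.rad A

end HoehnkeRadical

/-- A Kurosh-Amitsur radical: a Hoehnke radical such that (i) every `rad A` is a
Rees congruence, (ii) every member of `Σ_{rad A}` is in the radical class, and
(iii) every system of pairwise disjoint non-trivial subacts belonging to the
radical class is below `Σ_{rad A}`. -/
structure KARadical (S : Type u) [Monoid S] extends HoehnkeRadical S where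
  rees : ∀ A : SAct S, IsRees A (rad A)
  cls_rad : ∀ A : SAct S, ∀ B ∈ nsClasses A (rad A), ∀ h : IsSubact A B,
    A.sub B h ∈ toHoehnkeRadical.radClass
  maximal : ∀ (A : SAct S) (Sys : Set (Set A.carrier)), IsSystem A Sys →
    (∀ B ∈ Sys, ∀ h : IsSubact A B, A.sub B h ∈ toHoehnkeRadical.radClass) →
    ∀ B ∈ Sys, ∃ C ∈ nsClasses A (rad A), B ⊆ C

/-- A torsion theory: a pair `(T, F)` of classes of `S`-acts, each closed under
isomorphism and containing all trivial acts, such that (1) every homomorphism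
from a member of `T` to a member of `F` is trivial, (2) `T` contains every act
all of whose homomorphisms into members of `F` are trivial, and (3) `F`
contains every act all of whose homomorphisms from members of `T` are trivial. -/
structure IsTorsionTheory {S : Type u} [Monoid S] (T F : Set (SAct S)) : Prop where
  iso_T : ∀ A B : SAct S, AreIso A B → A ∈ T → B ∈ T
  iso_F : ∀ A B : SAct S, AreIso A B → A ∈ F → B ∈ F
  trivial_T : ∀ A : SAct S, Subsingleton A.carrier → A ∈ T
  trivial_F : ∀ A : SAct S, Subsingleton A.carrier → A ∈ F
  hom_trivial : ∀ A ∈ T, ∀ B ∈ F, ∀ f : A.carrier → B.carrier,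
    IsHom A B f → IsTrivialHom (A := A) (B := B) f
  mem_T : ∀ A : SAct S,
    (∀ B ∈ F, ∀ f : A.carrier → B.carrier, IsHom A B f → IsTrivialHom (A := A) (B := B) f) →
    A ∈ T
  mem_F : ∀ B : SAct S,
    (∀ A ∈ T, ∀ f : A.carrier → B.carrier, IsHom A B f → IsTrivialHom (A := A) (B := B) f) →
    B ∈ F

/-- The product of a family of `S`-acts. -/
def prodAct {S : Type u} [Monoid S] (ι : Type u) (f : ι → SAct S) : SAct S where
  carrier := ∀ i, (f i).carrier
  mulAction := inferInstance

/-- The Hoehnke radical `r_C` determined by a class `C` closed under subacts and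
products: the meet of all congruences whose quotient lies in `C`. -/
def radC {S : Type u} [Monoid S] (C : Set (SAct S)) (A : SAct S) : Setoid A.carrier :=
  sInf {χ : Setoid A.carrier | ∃ h : IsActCon A χ, A.quot χ h ∈ C}

/-- The radical class `R_{r_C}` of the Hoehnke radical `r_C`. -/
def RradC {S : Type u} [Monoid S] (C : Set (SAct S)) : Set (SAct S) :=
  {A | radC C A = ⊤}

theorem KA_radical_pair_conditions (S : Type u) [Monoid S] (r : KARadical S) :
    (∀ A : SAct S, A ∈ r.toHoehnkeRadical.radClass → A ∈ r.toHoehnkeRadical.ssClass →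
      Subsingleton A.carrier) ∧
    (∀ A ∈ r.toHoehnkeRadical.radClass, ∀ B : SAct S, ∀ f : A.carrier → B.carrier,
      IsHom A B f → Function.Surjective f → B ∈ r.toHoehnkeRadical.radClass) ∧
    (∀ A ∈ r.toHoehnkeRadical.ssClass, ∀ (B : Set A.carrier) (h : IsSubact A B),
      A.sub B h ∈ r.toHoehnkeRadical.ssClass) ∧
    (∀ A : SAct S, ∃ (Sys : Set (Set A.carrier)) (hSys : IsSystem A Sys),
      (∀ B ∈ Sys, ∀ h : IsSubact A B, A.sub B h ∈ r.toHoehnkeRadical.radClass) ∧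
      A.quot (reesSetoid A Sys hSys) (reesSetoid_isActCon A Sys hSys) ∈
        r.toHoehnkeRadical.ssClass) := by
  refine ⟨?_, ?_, ?_, ?_⟩
  · -- (1) radical ∩ semisimple = trivial
    intro A hR hS
    constructor
    intro a b
    have htop : (r.toHoehnkeRadical.rad A) a b := by
      rw [hR]; exact trivial
    rw [hS] at htop
    exact htop
  · -- (2) radical class is homomorphically closed
    intro A hA B f hf hsurj
    have hall : ∀ b b' : B.carrier, (r.toHoehnkeRadical.rad B) b b' := by
      intro b b'
      obtain ⟨a, rfl⟩ := hsurj b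
      obtain ⟨a', rfl⟩ := hsurj b'
      exact r.toHoehnkeRadical.functorial f hf a a' (by rw [hA]; exact trivial)
    apply le_antisymm le_top
    intro b b' _
    exact hall b b'
  · -- (3) semisimple class is closed under subacts
    intro A hA B h
    have hincl : IsHom (A.sub B h) A (Subtype.val : ↥B → A.carrier) := fun s a => rfl
    apply le_antisymm _ bot_le
    intro b b' hbb'
    have := r.toHoehnkeRadical.functorial (A := A.sub B h) (B := A)
      (Subtype.val : ↥B → A.carrier) hincl b b' hbb'
    rw [hA] at this
    exact Subtype.ext this
  · -- (4) existence of a system with radical members and semisimple quotient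
    intro A
    obtain ⟨Sys, hSys, hρ⟩ := r.rees A
    refine ⟨Sys, hSys, ?_, ?_⟩
    · intro B hB h
      apply r.cls_rad A B _ h
      -- B is a non-singleton class of rad A
      obtain ⟨a, ha, -, -, -⟩ := Set.not_subsingleton_iff.mp (hSys.1 B hB).2
      refine ⟨⟨a, ?_⟩, (hSys.1 B hB).2⟩
      ext x
      simp only [Set.mem_setOf_eq, hρ]
      symm
      rw [hρ]
      show (x = a ∨ ∃ C ∈ Sys, x ∈ C ∧ a ∈ C) ↔ x ∈ B
      constructor
      · rintro (rfl | ⟨C, hC, hx, haC⟩)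
        · exact ha
        · by_cases hBC : B = C
          · exact hBC ▸ hx
          · exact absurd haC (hSys.2 B hB C hC hBC a ha)
      · intro hx
        exact Or.inr ⟨B, hB, hx, ha⟩
    · have key : ∀ (ρ : Setoid A.carrier) (hc : IsActCon A ρ),
          ρ = r.toHoehnkeRadical.rad A →
          r.toHoehnkeRadical.rad (A.quot ρ hc) = ⊥ := by
        rintro ρ hc rfl
        exact r.toHoehnkeRadical.rad_quot A
      exact key _ _ hρ.symm
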